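/- arXiv:math/0006227 — 3 statements merged into one kernel-verified Lean document; each statement's English description precedes it below -/
import Mathlib

section
/- Let n, k ≥ 1, set l = 2n+2k+2, let s ∈ ℂ be a primitive 2l-th root of unity, and let g ≥ 1 be an integer. Then, with [m]_s = s^m − s^{−m}, one has the level-rank duality identity (−l)^{n(g−1)} · ∑_{n+k ≥ l_1 > … > l_n > 0} ( ∏_{j=1}^{n} [2l_j]_s · ∏_{1≤i<j≤n} [l_i+l_j]_s·[l_i−l_j]_s )^{2(1−g)} = (−l)^{k(g−1)} · ∑_{n+k ≥ m_1 > … > m_k > 0} ( ∏_{j=1}^{k} [2m_j]_s · ∏_{1≤i<j≤k} [m_i+m_j]_s·[m_i−m_j]_s )^{2(1−g)}, where the left sum runs over strictly decreasing n-tuples and the right sum over strictly decreasing k-tuples of positive integers bounded by n+k, and negative integer powers denote inverses in ℂ. -/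
open Finset

/-- `[m]_s = s^m - s^{-m}`. -/
noncomputable def br (s : ℂ) (m : ℤ) : ℂ := s ^ m - s ^ (-m)

/-- The index set of strictly decreasing tuples `b ≥ l_1 > l_2 > … > l_n > 0`
(with `t j = l_{j+1}`). -/
noncomputable def Tuples' (n b : ℕ) : Finset (Fin n → ℕ) :=
  (Finset.Icc 0 (fun _ => b)).filter
    (fun t => (∀ i j : Fin n, i < j → t j < t i) ∧ ∀ i, 0 < t i)

/-- `∏_{j=1}^n [2l_j]_s · ∏_{1≤i<j≤n} [l_i+l_j]_s [l_i-l_j]_s`. -/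
noncomputable def Pprod (s : ℂ) (n : ℕ) (t : Fin n → ℕ) : ℂ :=
  (∏ j : Fin n, br s (2 * (t j : ℤ))) *
  ∏ p ∈ (Finset.univ ×ˢ Finset.univ : Finset (Fin n × Fin n)).filter (fun p => p.1 < p.2),
    br s ((t p.1 : ℤ) + (t p.2 : ℤ)) * br s ((t p.1 : ℤ) - (t p.2 : ℤ))

section
open Polynomial
variable {ζ : ℂ} {l : ℕ}

lemma rootsEq (hl : 0 < l) (hζ : IsPrimitiveRoot ζ l) :
    Polynomial.nthRootsFinset l (1 : ℂ) = (range l).image (ζ ^ ·) := by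
  symm
  apply Finset.eq_of_subset_of_card_le
  · intro x hx
    obtain ⟨j, hj, rfl⟩ := Finset.mem_image.1 hx
    rw [Polynomial.mem_nthRootsFinset hl, ← pow_mul, mul_comm, pow_mul, hζ.pow_eq_one, one_pow]
  · rw [hζ.card_nthRootsFinset, Finset.card_image_of_injOn (by exact_mod_cast hζ.injOn_pow),
      card_range]

lemma polyId (hl : 0 < l) (hζ : IsPrimitiveRoot ζ l) :
    (X : ℂ[X]) ^ l - 1 = ∏ j ∈ range l, (X - C (ζ ^ j)) := by
  rw [X_pow_sub_one_eq_prod hl hζ, rootsEq hl hζ,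
    Finset.prod_image (by intro i hi j hj h; exact hζ.pow_inj (by simpa using hi) (by simpa using hj) h)]

lemma prod_one_sub (hl : 0 < l) (hζ : IsPrimitiveRoot ζ l) :
    ∏ j ∈ (range l).erase 0, (1 - ζ ^ j) = (l : ℂ) := by
  have h0 : (0:ℕ) ∈ range l := mem_range.2 hl
  have key : ((X : ℂ[X]) - 1) * ∏ j ∈ (range l).erase 0, (X - C (ζ ^ j))
      = ((X : ℂ[X]) - 1) * ∑ i ∈ range l, X ^ i := by
    have h1 : ((X : ℂ[X]) - C (ζ ^ 0)) * ∏ j ∈ (range l).erase 0, (X - C (ζ ^ j))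
        = ∏ j ∈ range l, (X - C (ζ ^ j)) := Finset.mul_prod_erase _ (fun j => (X - C (ζ ^ j))) h0
    have h2 : (∑ i ∈ range l, (X:ℂ[X]) ^ i) * (X - 1) = X ^ l - 1 := geom_sum_mul X l
    simp only [pow_zero, map_one] at h1
    rw [h1, ← polyId hl hζ, ← h2, mul_comm]
  have hX1 : ((X : ℂ[X]) - 1) ≠ 0 := X_sub_C_ne_zero 1
  have key2 := mul_left_cancel₀ hX1 key
  have := congrArg (Polynomial.eval 1) key2
  simpa [Polynomial.eval_prod, Polynomial.eval_finset_sum] using this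


lemma pow_mod (hζ : IsPrimitiveRoot ζ l) (j : ℕ) : ζ ^ (j % l) = ζ ^ j := by
  conv_rhs => rw [← Nat.mod_add_div j l]
  rw [pow_add, pow_mul, hζ.pow_eq_one, one_pow, mul_one]

lemma derivAtRoot (hl : 0 < l) (hζ : IsPrimitiveRoot ζ l) {a : ℕ} (ha : a < l) :
    ∏ j ∈ (range l).erase a, (ζ ^ a - ζ ^ j) = ζ ^ (a * (l - 1)) * (l : ℂ) := by
  have hzl : ζ ^ l = 1 := hζ.pow_eq_one
  set φ : ℕ → ℕ := fun j => if a ≤ j then j - a else j + l - a with hφ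
  have hstep : ∀ j : ℕ, j < l → ζ ^ a - ζ ^ j = ζ ^ a * (1 - ζ ^ (φ j)) := by
    intro j hj
    have : ζ ^ a * ζ ^ (φ j) = ζ ^ j := by
      rw [← pow_add, hφ]
      by_cases hc : a ≤ j
      · simp only [if_pos hc]
        congr 1
        omega
      · simp only [if_neg hc]
        have : a + (j + l - a) = j + l := by omega
        rw [this, pow_add, hzl, mul_one]
    rw [mul_sub, mul_one, this]
  calc ∏ j ∈ (range l).erase a, (ζ ^ a - ζ ^ j)
      = ∏ j ∈ (range l).erase a, (ζ ^ a * (1 - ζ ^ (φ j))) :=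
        Finset.prod_congr rfl fun j hj => hstep j (by simpa using (mem_erase.1 hj).2)
    _ = ζ ^ (a * (l-1)) * ∏ j ∈ (range l).erase a, (1 - ζ ^ (φ j)) := by
        rw [Finset.prod_mul_distrib, Finset.prod_const, card_erase_of_mem (mem_range.2 ha),
          card_range, ← pow_mul]
    _ = ζ ^ (a * (l-1)) * ∏ i ∈ (range l).erase 0, (1 - ζ ^ i) := by
        congr 1
        apply Finset.prod_nbij' φ (fun i => if i + a < l then i + a else i + a - l)
        · intro j hj
          simp only [mem_erase, mem_range, hφ] at hj ⊢
          split <;> omega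
        · intro i hi
          simp only [mem_erase, mem_range] at hi ⊢
          split <;> omega
        · intro j hj
          simp only [mem_erase, mem_range, hφ] at hj ⊢
          split
          · split <;> omega
          · split <;> omega
        · intro i hi
          simp only [mem_erase, mem_range, hφ] at hi ⊢
          split
          · split <;> omega
          · split <;> omega
        · intro j hj
          rfl
    _ = ζ ^ (a * (l-1)) * (l:ℂ) := by rw [prod_one_sub hl hζ]


noncomputable def xc (ζ : ℂ) (l a : ℕ) : ℂ := ζ ^ a + ζ ^ (l - a)

variable {ζ : ℂ} {m : ℕ}

section Btest
variable (hm : 1 ≤ m) (hζ : IsPrimitiveRoot ζ (2*m+2))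
include hm hζ

lemma zeta_ne_zero : ζ ≠ 0 := by
  intro h
  have := hζ.pow_eq_one
  rw [h, zero_pow (by omega)] at this
  exact zero_ne_one this

lemma zeta_m1 : ζ ^ (m+1) = -1 := by
  have hsq : (ζ ^ (m+1)) ^ 2 = 1 := by
    rw [← pow_mul]
    have : (m+1) * 2 = 2*m+2 := by ring
    rw [this, hζ.pow_eq_one]
  have hne : ζ ^ (m+1) ≠ 1 := hζ.pow_ne_one_of_pos_of_lt (by omega) (by omega)
  have hfac : (ζ ^ (m+1) - 1) * (ζ ^ (m+1) + 1) = 0 := by linear_combination hsq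
  rcases mul_eq_zero.1 hfac with h | h
  · exact absurd (sub_eq_zero.1 h) hne
  · linear_combination h

lemma inv_pair {a : ℕ} (ha : a ≤ 2*m+2) : ζ ^ a * ζ ^ (2*m+2 - a) = 1 := by
  rw [← pow_add]
  have : a + (2*m+2 - a) = 2*m+2 := by omega
  rw [this, hζ.pow_eq_one]

lemma pairF {a b : ℕ} (ha : a ≤ 2*m+2) (hb : b ≤ 2*m+2) :
    ζ ^ a * (xc ζ (2*m+2) a - xc ζ (2*m+2) b)
      = (ζ ^ a - ζ ^ b) * (ζ ^ a - ζ ^ (2*m+2 - b)) := by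
  unfold xc
  linear_combination inv_pair hm hζ ha - inv_pair hm hζ hb

lemma hC2' {a : ℕ} (ha : a ≤ 2*m+2) :
    ζ ^ a * ζ ^ a * (xc ζ (2*m+2) a ^ 2 - 4)
      = (ζ ^ a - 1)^2 * (ζ ^ a + 1)^2 := by
  unfold xc
  linear_combination (2 * (ζ^a * ζ^a) + ζ^a * ζ^(2*m+2-a) + 1) * inv_pair hm hζ ha

lemma hD' {a : ℕ} (ha : a ≤ 2*m+2) :
    ζ ^ a - ζ ^ (2*m+2 - a) = ζ ^ (2*m+2 - a) * (ζ ^ a - 1) * (ζ ^ a + 1) := by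
  linear_combination (-(ζ^a)) * inv_pair hm hζ ha

lemma hscal' {a : ℕ} (ha : a ≤ 2*m+2) :
    ζ ^ (a * (2*m+2 - 1)) = (-1)^a * (ζ^a * ζ^a * ζ^(a*(m-1)) * ζ^(2*m+2 - a)) := by
  apply mul_right_cancel₀ (pow_ne_zero a (zeta_ne_zero hm hζ))
  have hL : ζ ^ (a * (2*m+2-1)) * ζ ^ a = 1 := by
    rw [← pow_add]
    have h21 : 2*m+2-1 = 2*m+1 := by omega
    have : a * (2*m+1) + a = a * (2*m+2) := by ring
    rw [h21, this, pow_mul', hζ.pow_eq_one, one_pow]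
  have e1 : a*(m-1) + (a+a) = a*(m+1) := by
    have h2 : m+1 = (m-1)+2 := by omega
    rw [h2, Nat.mul_add]
    ring
  have hR : ζ^a * ζ^a * ζ^(a*(m-1)) * ζ^(2*m+2-a) * ζ^a = ζ^(a*(m+1)) := by
    calc ζ^a * ζ^a * ζ^(a*(m-1)) * ζ^(2*m+2-a) * ζ^a
        = ζ^(a*(m-1)) * ζ^a * ζ^a * (ζ^a * ζ^(2*m+2-a)) := by ring
      _ = ζ^(a*(m-1)) * ζ^a * ζ^a := by rw [inv_pair hm hζ ha, mul_one]
      _ = ζ^(a*(m-1) + (a+a)) := by rw [pow_add, pow_add]; ring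
      _ = ζ^(a*(m+1)) := by rw [e1]
  rw [hL]
  symm
  calc (-1:ℂ)^a * (ζ^a * ζ^a * ζ^(a*(m-1)) * ζ^(2*m+2-a)) * ζ^a
      = (-1)^a * (ζ^a * ζ^a * ζ^(a*(m-1)) * ζ^(2*m+2-a) * ζ^a) := by ring
    _ = (-1)^a * (ζ^(m+1))^a := by rw [hR, pow_mul']
    _ = (-1)^a * (-1:ℂ)^a := by rw [zeta_m1 hm hζ]
    _ = ((-1)*(-1):ℂ)^a := by rw [mul_pow]
    _ = 1 := by norm_num

lemma zeta_pow_ne_one {a : ℕ} (ha : a ∈ Icc 1 m) : ζ ^ a ≠ 1 := by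
  rw [mem_Icc] at ha
  exact hζ.pow_ne_one_of_pos_of_lt (by omega) (by omega)

lemma zeta_pow_ne_negone {a : ℕ} (ha : a ∈ Icc 1 m) : ζ ^ a ≠ -1 := by
  rw [mem_Icc] at ha
  intro h
  have : ζ ^ a = ζ ^ (m+1) := by rw [h, zeta_m1 hm hζ]
  have := hζ.pow_inj (by omega) (by omega) this
  omega

lemma x2ne {a : ℕ} (ha : a ∈ Icc 1 m) : xc ζ (2*m+2) a ^ 2 - 4 ≠ 0 := by
  have hmem := ha
  rw [mem_Icc] at hmem
  intro h
  have h2 := hC2' hm hζ (a := a) (by omega)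
  rw [h, mul_zero] at h2
  have hp1 : (ζ^a - 1 : ℂ) ≠ 0 := sub_ne_zero.2 (zeta_pow_ne_one hm hζ ha)
  have hp2 : (ζ^a + 1 : ℂ) ≠ 0 := by
    intro hz
    apply zeta_pow_ne_negone hm hζ ha
    linear_combination hz
  exact (mul_ne_zero (pow_ne_zero 2 hp1) (pow_ne_zero 2 hp2)) h2.symm

lemma xne {a b : ℕ} (ha : a ∈ Icc 1 m) (hb : b ∈ Icc 1 m) (hab : a ≠ b) :
    xc ζ (2*m+2) a - xc ζ (2*m+2) b ≠ 0 := by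
  have hma := mem_Icc.1 ha
  have hmb := mem_Icc.1 hb
  intro h
  have hp := pairF hm hζ (a := a) (b := b) (by omega) (by omega)
  rw [h, mul_zero] at hp
  have h1 : ζ ^ a - ζ ^ b ≠ 0 := by
    rw [sub_ne_zero]
    intro he
    exact hab (hζ.pow_inj (by omega) (by omega) he)
  have h2 : ζ ^ a - ζ ^ (2*m+2-b) ≠ 0 := by
    rw [sub_ne_zero]
    intro he
    have := hζ.pow_inj (by omega) (by omega) he
    omega
  exact mul_ne_zero h1 h2 hp.symm

lemma unionEq {a : ℕ} (ha : a ∈ Icc 1 m) :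
    ((Icc 1 m).erase a) ∪ ((Icc 1 m).erase a).image (fun b => 2*m+2 - b)
      = ((((range (2*m+2)).erase a).erase 0).erase (2*m+2-a)).erase (m+1) := by
  have hma := mem_Icc.1 ha
  ext j
  simp only [mem_union, mem_erase, mem_Icc, mem_image, mem_range]
  constructor
  · rintro (⟨hne, h1, h2⟩ | ⟨b, ⟨hbne, hb1, hb2⟩, rfl⟩) <;> omega
  · rintro ⟨h1, h2, h3, h4, h5⟩
    by_cases hj : j ≤ m
    · left; exact ⟨h4, by omega, hj⟩
    · right; exact ⟨2*m+2-j, ⟨by omega, by omega, by omega⟩, by omega⟩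

lemma keyElem {a : ℕ} (ha : a ∈ Icc 1 m) :
    (xc ζ (2*m+2) a ^ 2 - 4) *
      ∏ b ∈ (Icc 1 m).erase a, (xc ζ (2*m+2) a - xc ζ (2*m+2) b)
      = (-1)^a * ((2*m+2 : ℕ) : ℂ) := by
  have hma := mem_Icc.1 ha
  set l := 2*m+2 with hl
  set B := (Icc 1 m).erase a with hBdef
  set E := ((((range l).erase a).erase 0).erase (l-a)).erase (m+1) with hEdef
  have hcardB : B.card = m - 1 := by
    rw [hBdef, card_erase_of_mem ha, Nat.card_Icc]
    omega
  -- hA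
  have hA : ζ ^ (a*(m-1)) * ∏ b ∈ B, (xc ζ l a - xc ζ l b)
      = ∏ j ∈ E, (ζ ^ a - ζ ^ j) := by
    have step1 : ∏ b ∈ B, (ζ ^ a * (xc ζ l a - xc ζ l b))
        = ζ ^ (a*(m-1)) * ∏ b ∈ B, (xc ζ l a - xc ζ l b) := by
      rw [Finset.prod_mul_distrib, Finset.prod_const, hcardB, ← pow_mul]
    have step2 : ∏ b ∈ B, (ζ ^ a * (xc ζ l a - xc ζ l b))
        = ∏ b ∈ B, ((ζ ^ a - ζ ^ b) * (ζ ^ a - ζ ^ (l - b))) := by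
      refine Finset.prod_congr rfl fun b hb => ?_
      have hmb := mem_Icc.1 (mem_of_mem_erase hb)
      exact pairF hm hζ (by omega) (by omega)
    have hinj : Set.InjOn (fun b => l - b) B := by
      intro u hu v hv huv
      simp only [hBdef, coe_erase, Set.mem_diff, coe_Icc, Set.mem_Icc] at hu hv
      simp only at huv
      omega
    have hdisj : Disjoint B (B.image (fun b => l - b)) := by
      rw [Finset.disjoint_left]
      intro u hu hu2
      obtain ⟨c, hc, hcu⟩ := Finset.mem_image.1 hu2
      have h1 := mem_Icc.1 (mem_of_mem_erase hu)
      have h2 := mem_Icc.1 (mem_of_mem_erase hc)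
      omega
    have step3 : ∏ b ∈ B, ((ζ ^ a - ζ ^ b) * (ζ ^ a - ζ ^ (l - b)))
        = ∏ j ∈ B ∪ B.image (fun b => l - b), (ζ ^ a - ζ ^ j) := by
      rw [Finset.prod_mul_distrib, Finset.prod_union hdisj,
        Finset.prod_image (by exact_mod_cast hinj)]
    rw [← step1, step2, step3, hBdef, unionEq hm hζ ha]
  -- hB
  have h0m : (0:ℕ) ∈ ((range l).erase a) :=
    mem_erase.2 ⟨by omega, mem_range.2 (by omega)⟩
  have hlam : (l - a) ∈ (((range l).erase a).erase 0) :=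
    mem_erase.2 ⟨by omega, mem_erase.2 ⟨by omega, mem_range.2 (by omega)⟩⟩
  have hm1m : (m+1) ∈ ((((range l).erase a).erase 0).erase (l-a)) :=
    mem_erase.2 ⟨by omega, mem_erase.2 ⟨by omega, mem_erase.2 ⟨by omega, mem_range.2 (by omega)⟩⟩⟩
  have e0 := Finset.mul_prod_erase _ (fun j => ζ ^ a - ζ ^ j) h0m
  have e1 := Finset.mul_prod_erase _ (fun j => ζ ^ a - ζ ^ j) hlam
  have e2 := Finset.mul_prod_erase _ (fun j => ζ ^ a - ζ ^ j) hm1m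
  have hderiv := derivAtRoot (l := l) (by omega) hζ (a := a) (by omega)
  have hB : (ζ ^ a - 1) * ((ζ ^ a - ζ ^ (l-a)) * ((ζ ^ a + 1) * ∏ j ∈ E, (ζ ^ a - ζ ^ j)))
      = ζ ^ (a*(l-1)) * (l : ℂ) := by
    rw [← hderiv, ← e0]
    simp only [pow_zero]
    congr 1
    rw [← e1]
    congr 1
    rw [← e2, hEdef]
    congr 1
    show ζ ^ a + 1 = ζ ^ a - ζ ^ (m+1)
    rw [zeta_m1 hm hζ, sub_neg_eq_add]
  -- assembly
  have hC2 := hC2' hm hζ (a := a) (by omega)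
  have hD := hD' hm hζ (a := a) (by omega)
  have hscal := hscal' hm hζ (a := a) (by omega)
  have hwne : ζ ^ a * ζ ^ a * ζ ^ (a*(m-1)) * ((ζ ^ a - 1) * (ζ ^ a + 1) * (ζ ^ a - ζ ^ (l-a))) ≠ 0 := by
    have hz := zeta_ne_zero hm hζ
    have h1 : ζ ^ a - 1 ≠ 0 := sub_ne_zero.2 (zeta_pow_ne_one hm hζ ha)
    have h2 : ζ ^ a + 1 ≠ 0 := by
      intro hz2
      apply zeta_pow_ne_negone hm hζ ha
      linear_combination hz2
    have h3 : ζ ^ a - ζ ^ (l-a) ≠ 0 := by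
      rw [hD]
      exact mul_ne_zero (mul_ne_zero (pow_ne_zero _ hz) h1) h2
    exact mul_ne_zero (mul_ne_zero (mul_ne_zero (pow_ne_zero _ hz) (pow_ne_zero _ hz)) (pow_ne_zero _ hz))
      (mul_ne_zero (mul_ne_zero h1 h2) h3)
  apply mul_right_cancel₀ hwne
  calc (xc ζ l a ^ 2 - 4) * (∏ b ∈ B, (xc ζ l a - xc ζ l b)) *
        (ζ ^ a * ζ ^ a * ζ ^ (a*(m-1)) * ((ζ ^ a - 1) * (ζ ^ a + 1) * (ζ ^ a - ζ ^ (l-a))))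
      = (ζ ^ a * ζ ^ a * (xc ζ l a ^ 2 - 4)) * (ζ ^ (a*(m-1)) * ∏ b ∈ B, (xc ζ l a - xc ζ l b))
        * ((ζ ^ a - 1) * (ζ ^ a + 1) * (ζ ^ a - ζ ^ (l-a))) := by ring
    _ = ((ζ ^ a - 1)^2 * (ζ ^ a + 1)^2) * (∏ j ∈ E, (ζ ^ a - ζ ^ j))
        * ((ζ ^ a - 1) * (ζ ^ a + 1) * (ζ ^ a - ζ ^ (l-a))) := by rw [hC2, hA]
    _ = ((ζ ^ a - 1)^2 * (ζ ^ a + 1)^2) *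
        ((ζ ^ a - 1) * ((ζ ^ a - ζ ^ (l-a)) * ((ζ ^ a + 1) * ∏ j ∈ E, (ζ ^ a - ζ ^ j)))) := by ring
    _ = ((ζ ^ a - 1)^2 * (ζ ^ a + 1)^2) * (ζ ^ (a*(l-1)) * (l:ℂ)) := by rw [hB]
    _ = ((ζ ^ a - 1)^2 * (ζ ^ a + 1)^2) *
        ((-1)^a * (ζ^a * ζ^a * ζ^(a*(m-1)) * ζ^(l-a)) * (l:ℂ)) := by rw [← hscal]
    _ = (-1)^a * (l:ℂ) * (ζ^a * ζ^a * ζ^(a*(m-1)) *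
        ((ζ ^ a - 1) * (ζ ^ a + 1) * (ζ^(l-a) * (ζ ^ a - 1) * (ζ ^ a + 1)))) := by ring
    _ = (-1)^a * ((l:ℕ):ℂ) * (ζ^a * ζ^a * ζ^(a*(m-1)) *
        ((ζ ^ a - 1) * (ζ ^ a + 1) * (ζ ^ a - ζ ^ (l-a)))) := by
          rw [← hD]
end Btest

noncomputable def Qc (ζ : ℂ) (m : ℕ) (S : Finset ℕ) : ℂ :=
  (∏ a ∈ S, (xc ζ (2*m+2) a ^ 2 - 4)) *
    ∏ a ∈ S, ∏ b ∈ S.erase a, (xc ζ (2*m+2) a - xc ζ (2*m+2) b)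

section Ctest
variable {ζ : ℂ} {m : ℕ}
variable (hm : 1 ≤ m) (hζ : IsPrimitiveRoot ζ (2*m+2))
include hm hζ

lemma QX {S : Finset ℕ} (hS : S ⊆ Icc 1 m) :
    Qc ζ m S * (∏ a ∈ S, ∏ b ∈ Icc 1 m \ S, (xc ζ (2*m+2) a - xc ζ (2*m+2) b))
      = (-1)^(∑ a ∈ S, a) * (((2*m+2 : ℕ)):ℂ)^S.card := by
  have hsplit : ∀ a ∈ S, (S.erase a) ∪ (Icc 1 m \ S) = (Icc 1 m).erase a := by
    intro a haS
    ext j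
    simp only [mem_union, mem_erase, mem_sdiff]
    constructor
    · rintro (⟨hja, hjS⟩ | ⟨hjI, hjS⟩)
      · exact ⟨hja, hS hjS⟩
      · exact ⟨fun h => hjS (h ▸ haS), hjI⟩
    · rintro ⟨hja, hjI⟩
      by_cases hj : j ∈ S
      · exact Or.inl ⟨hja, hj⟩
      · exact Or.inr ⟨hjI, hj⟩
  have hdisj : ∀ a ∈ S, Disjoint (S.erase a) (Icc 1 m \ S) := by
    intro a _
    exact Finset.disjoint_left.2 fun u hu hu2 => (mem_sdiff.1 hu2).2 (mem_of_mem_erase hu)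
  calc Qc ζ m S * (∏ a ∈ S, ∏ b ∈ Icc 1 m \ S, (xc ζ (2*m+2) a - xc ζ (2*m+2) b))
      = ∏ a ∈ S, ((xc ζ (2*m+2) a ^ 2 - 4) *
          ((∏ b ∈ S.erase a, (xc ζ (2*m+2) a - xc ζ (2*m+2) b)) *
           (∏ b ∈ Icc 1 m \ S, (xc ζ (2*m+2) a - xc ζ (2*m+2) b)))) := by
        unfold Qc
        rw [Finset.prod_mul_distrib]
        rw [Finset.prod_mul_distrib]
        ring
    _ = ∏ a ∈ S, ((xc ζ (2*m+2) a ^ 2 - 4) *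
          ∏ b ∈ (Icc 1 m).erase a, (xc ζ (2*m+2) a - xc ζ (2*m+2) b)) := by
        refine Finset.prod_congr rfl fun a haS => ?_
        rw [← Finset.prod_union (hdisj a haS), hsplit a haS]
    _ = ∏ a ∈ S, ((-1 : ℂ)^a * ((2*m+2 : ℕ) : ℂ)) := by
        refine Finset.prod_congr rfl fun a haS => ?_
        exact keyElem hm hζ (hS haS)
    _ = (-1)^(∑ a ∈ S, a) * (((2*m+2 : ℕ)):ℂ)^S.card := by
        rw [Finset.prod_mul_distrib, Finset.prod_const, Finset.prod_pow_eq_pow_sum]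

lemma Qne {S : Finset ℕ} (hS : S ⊆ Icc 1 m) : Qc ζ m S ≠ 0 := by
  unfold Qc
  apply mul_ne_zero
  · rw [Finset.prod_ne_zero_iff]
    exact fun a ha => x2ne hm hζ (hS ha)
  · rw [Finset.prod_ne_zero_iff]
    intro a ha
    rw [Finset.prod_ne_zero_iff]
    intro b hb
    exact xne hm hζ (hS ha) (hS (mem_of_mem_erase hb)) (Ne.symm (ne_of_mem_erase hb))

lemma Xne {S : Finset ℕ} (hS : S ⊆ Icc 1 m) :
    (∏ a ∈ S, ∏ b ∈ Icc 1 m \ S, (xc ζ (2*m+2) a - xc ζ (2*m+2) b)) ≠ 0 := by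
  rw [Finset.prod_ne_zero_iff]
  intro a ha
  rw [Finset.prod_ne_zero_iff]
  intro b hb
  have hbI := (mem_sdiff.1 hb).1
  have hbS := (mem_sdiff.1 hb).2
  exact xne hm hζ (hS ha) hbI (fun h => hbS (h ▸ ha))

end Ctest

lemma mhelper (m : ℕ) : 2*m + m*(m-1) + m*(m+1) = (m + m*m)*2 := by
  rcases m with _ | c
  · simp
  · simp only [Nat.succ_sub_one]
    ring

lemma evenId (m : ℕ) : Even (m + m*m) := by
  have h := Nat.even_mul_succ_self m
  have : m * (m+1) = m + m*m := by ring
  rwa [this] at h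

lemma negSq (e : ℕ) : ((-1 : ℂ)^e) * ((-1 : ℂ)^e) = 1 := by
  rw [← pow_add, ← two_mul, pow_mul]
  norm_num

lemma eq_of_mul_eq_one_selfinv {x y : ℂ} (h : x*y = 1) (hy : y*y = 1) : x = y := by
  calc x = x*(y*y) := by rw [hy, mul_one]
    _ = (x*y)*y := by ring
    _ = y := by rw [h, one_mul]

lemma halfMul {j : ℕ} : j*(j-1)/2*2 = j*(j-1) := by
  apply Nat.div_mul_cancel
  rcases j with _ | c
  · simp
  · simp only [Nat.succ_sub_one]
    rw [mul_comm]
    exact (Nat.even_mul_succ_self c).two_dvd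

lemma triIdent {n k : ℕ} (hn : 1 ≤ n) (hk : 1 ≤ k) :
    (n*(n-1)/2 + k*(k-1)/2 + n*k) * 2 = ((n+k)*((n+k)-1)/2) * 2 := by
  rw [Nat.add_mul, Nat.add_mul, halfMul, halfMul, halfMul]
  obtain ⟨a, rfl⟩ : ∃ a, n = a + 1 := ⟨n-1, by omega⟩
  obtain ⟨b, rfl⟩ : ∃ b, k = b + 1 := ⟨k-1, by omega⟩
  simp only [Nat.add_sub_cancel]
  have h1 : a + 1 + (b+1) - 1 = a + b + 1 := by omega
  rw [h1]
  ring

lemma gaussIcc (m : ℕ) : (∑ a ∈ Icc 1 m, a) * 2 = m*(m+1) := by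
  have h1 : range (m+1) = insert 0 (Icc 1 m) := by
    ext j
    simp only [mem_range, mem_insert, mem_Icc]
    omega
  have h2 : ∑ i ∈ range (m+1), i = ∑ a ∈ Icc 1 m, a := by
    rw [h1, Finset.sum_insert (by simp), zero_add]
  rw [← h2, Finset.sum_range_id_mul_two (m+1), Nat.add_sub_cancel]
  ring

section Dtest
variable {ζ : ℂ} {m : ℕ}
variable (hm : 1 ≤ m) (hζ : IsPrimitiveRoot ζ (2*m+2))
include hm hζ

lemma setDuality {S : Finset ℕ} (hS : S ⊆ Icc 1 m)
    (hn1 : 1 ≤ S.card) (hk1 : 1 ≤ (Icc 1 m \ S).card) :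
    (-((2*m+2:ℕ):ℂ))^S.card *
        ((-1)^((Icc 1 m \ S).card * ((Icc 1 m \ S).card - 1)/2) * Qc ζ m (Icc 1 m \ S))
      = (-((2*m+2:ℕ):ℂ))^((Icc 1 m \ S).card) *
        ((-1)^(S.card*(S.card-1)/2) * Qc ζ m S) := by
  set T := Icc 1 m \ S with hTdef
  have hT : T ⊆ Icc 1 m := sdiff_subset
  have hTc : Icc 1 m \ T = S := Finset.sdiff_sdiff_eq_self hS
  set n := S.card with hndef
  set k := T.card with hkdef
  have hnk : n + k = m := by
    have h2 : S.card ≤ m := by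
      have := Finset.card_le_card hS
      rwa [Nat.card_Icc, Nat.add_sub_cancel] at this
    have h1 : T.card = m - S.card := by
      rw [hTdef, Finset.card_sdiff_of_subset hS, Nat.card_Icc, Nat.add_sub_cancel]
    rw [hndef, hkdef, h1]
    omega
  set L := ((2*m+2:ℕ):ℂ) with hLdef
  set W := ∏ a ∈ S, ∏ b ∈ T, (xc ζ (2*m+2) a - xc ζ (2*m+2) b) with hWdef
  set p := n*k with hpdef
  have eS : Qc ζ m S * W = (-1)^(∑ a ∈ S, a) * L^n := QX hm hζ hS
  have eT' : Qc ζ m T * (∏ a ∈ T, ∏ b ∈ Icc 1 m \ T, (xc ζ (2*m+2) a - xc ζ (2*m+2) b))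
      = (-1)^(∑ a ∈ T, a) * L^k := QX hm hζ hT
  rw [hTc] at eT'
  have hswap : (∏ a ∈ T, ∏ b ∈ S, (xc ζ (2*m+2) a - xc ζ (2*m+2) b)) = (-1)^p * W := by
    calc (∏ a ∈ T, ∏ b ∈ S, (xc ζ (2*m+2) a - xc ζ (2*m+2) b))
        = ∏ a ∈ T, ∏ b ∈ S, ((-1 : ℂ) * (xc ζ (2*m+2) b - xc ζ (2*m+2) a)) := by
          refine Finset.prod_congr rfl fun a _ => Finset.prod_congr rfl fun b _ => by ring
      _ = ∏ a ∈ T, ((-1 : ℂ)^n * ∏ b ∈ S, (xc ζ (2*m+2) b - xc ζ (2*m+2) a)) := by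
          refine Finset.prod_congr rfl fun a _ => ?_
          rw [Finset.prod_mul_distrib, Finset.prod_const, hndef]
      _ = ((-1 : ℂ)^n)^k * ∏ a ∈ T, ∏ b ∈ S, (xc ζ (2*m+2) b - xc ζ (2*m+2) a) := by
          rw [Finset.prod_mul_distrib, Finset.prod_const, hkdef]
      _ = (-1)^p * W := by
          rw [← pow_mul, hWdef, hpdef, Finset.prod_comm]
  have eT : Qc ζ m T * ((-1 : ℂ)^p * W) = (-1)^(∑ a ∈ T, a) * L^k := by
    rw [← hswap]; exact eT'
  have hWne : W ≠ 0 := Xne hm hζ hS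
  set σS := ∑ a ∈ S, a with hσSdef
  set σT := ∑ a ∈ T, a with hσTdef
  set cn := n*(n-1)/2 with hcndef
  set ck := k*(k-1)/2 with hckdef
  set cm := m*(m-1)/2 with hcmdef
  have hσ : (σS + σT) * 2 = m * (m+1) := by
    rw [hσSdef, hσTdef, ← Finset.sum_union Finset.disjoint_sdiff, Finset.union_sdiff_of_subset hS]
    exact gaussIcc m
  have hCeq : (cn + ck + p) * 2 = cm * 2 := by
    have h := triIdent (n := n) (k := k) hn1 hk1
    rw [hnk] at h
    rw [hcndef, hckdef, hcmdef, hpdef]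
    exact h
  have hsc : (-1 : ℂ)^(n + (ck + p + σT)) = (-1 : ℂ)^(k + (cn + σS)) := by
    apply eq_of_mul_eq_one_selfinv _ (negSq _)
    rw [← pow_add]
    have hexp : (n + (ck + p + σT)) + (k + (cn + σS)) = m + (cm + (σS + σT)) := by omega
    rw [hexp]
    have hcm2 : cm * 2 = m*(m-1) := by rw [hcmdef]; exact halfMul
    obtain ⟨c, hc⟩ := evenId m
    have hX2 : (m + (cm + (σS+σT))) * 2 = (c + c) * 2 := by
      calc (m + (cm + (σS+σT)))*2 = 2*m + cm*2 + (σS+σT)*2 := by ring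
        _ = 2*m + m*(m-1) + m*(m+1) := by rw [hcm2, hσ]
        _ = (m + m*m)*2 := mhelper m
        _ = (c + c)*2 := by rw [hc]
    have heven : Even (m + (cm + (σS + σT))) := ⟨c, by omega⟩
    exact heven.neg_one_pow
  apply mul_right_cancel₀ hWne
  have e1 : Qc ζ m T * W = (-1:ℂ)^p * ((-1)^σT * L^k) := by
    calc Qc ζ m T * W = (-1:ℂ)^p * (Qc ζ m T * ((-1)^p * W)) := by
          rw [show (-1:ℂ)^p * (Qc ζ m T * ((-1)^p * W)) = ((-1:ℂ)^p * (-1)^p) * (Qc ζ m T * W) from by ring,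
            negSq p, one_mul]
      _ = (-1:ℂ)^p * ((-1)^σT * L^k) := by rw [eT]
  calc (-L)^n * ((-1:ℂ)^ck * Qc ζ m T) * W
      = (-1)^n * L^n * (-1:ℂ)^ck * (Qc ζ m T * W) := by rw [neg_pow]; ring
    _ = (-1)^n * L^n * (-1:ℂ)^ck * ((-1)^p * ((-1)^σT * L^k)) := by rw [e1]
    _ = ((-1:ℂ)^n * (-1)^ck * (-1)^p * (-1)^σT) * (L^n * L^k) := by ring
    _ = (-1:ℂ)^(n + (ck + p + σT)) * (L^n * L^k) := by
        rw [pow_add, pow_add, pow_add]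
        ring
    _ = (-1:ℂ)^(k + (cn + σS)) * (L^n * L^k) := by rw [hsc]
    _ = (-1:ℂ)^k * L^k * (-1:ℂ)^cn * ((-1)^σS * L^n) := by
        rw [pow_add, pow_add]
        ring
    _ = (-L)^k * ((-1:ℂ)^cn * Qc ζ m S) * W := by
        rw [← eS, neg_pow]
        ring

end Dtest

lemma prod_pairs_ne (S : Finset ℕ) (g : ℕ → ℕ → ℂ) :
    ∏ p ∈ (S ×ˢ S).filter (fun p => p.1 ≠ p.2), g p.1 p.2
      = ∏ a ∈ S, ∏ b ∈ S.erase a, g a b := by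
  rw [Finset.prod_filter, Finset.prod_product]
  refine Finset.prod_congr rfl fun a _ => ?_
  rw [← Finset.prod_filter]
  congr 1
  ext b
  simp only [mem_filter, mem_erase]
  tauto

lemma nnIdent (nn : ℕ) : nn*nn - nn = nn*(nn-1) := by
  rcases nn with _ | c
  · simp
  · simp only [Nat.succ_sub_one]
    have : (c+1)*(c+1) = (c+1)*c + (c+1) := by ring
    omega

lemma cardPairs (nn : ℕ) :
    (((univ ×ˢ univ : Finset (Fin nn × Fin nn))).filter (fun p => p.1 < p.2)).card
      = nn*(nn-1)/2 := by
  apply Nat.eq_of_mul_eq_mul_right (show 0 < 2 by norm_num)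
  have hswapcard : (((univ ×ˢ univ : Finset (Fin nn × Fin nn))).filter (fun p => p.1 < p.2)).card
      = (((univ ×ˢ univ : Finset (Fin nn × Fin nn))).filter (fun p => p.2 < p.1)).card := by
    apply Finset.card_nbij' (i := Prod.swap) (j := Prod.swap)
    · intro p hp
      simp only [mem_coe, mem_filter, mem_product, mem_univ, true_and] at hp ⊢
      exact hp
    · intro p hp
      simp only [mem_coe, mem_filter, mem_product, mem_univ, true_and] at hp ⊢
      exact hp
    · intro p _; simp
    · intro p _; simp
  have hunion : (((univ ×ˢ univ : Finset (Fin nn × Fin nn))).filter (fun p => p.1 < p.2))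
      ∪ (((univ ×ˢ univ : Finset (Fin nn × Fin nn))).filter (fun p => p.2 < p.1))
      = ((univ ×ˢ univ : Finset (Fin nn × Fin nn))).filter (fun p => p.1 ≠ p.2) := by
    ext p
    simp only [mem_union, mem_filter, mem_product, mem_univ, true_and]
    omega
  have hdisj : Disjoint (((univ ×ˢ univ : Finset (Fin nn × Fin nn))).filter (fun p => p.1 < p.2))
      (((univ ×ˢ univ : Finset (Fin nn × Fin nn))).filter (fun p => p.2 < p.1)) := by
    rw [Finset.disjoint_left]
    intro p hp hp2
    simp only [mem_filter] at hp hp2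
    omega
  have hcu := Finset.card_union_of_disjoint hdisj
  rw [hunion] at hcu
  have hoff : ((univ ×ˢ univ : Finset (Fin nn × Fin nn))).filter (fun p => p.1 ≠ p.2)
      = (univ : Finset (Fin nn)).offDiag := by
    ext p
    simp [Finset.mem_offDiag]
  have hD : (((univ ×ˢ univ : Finset (Fin nn × Fin nn))).filter (fun p => p.1 ≠ p.2)).card
      = nn*nn - nn := by
    rw [hoff, Finset.offDiag_card, card_univ, Fintype.card_fin]
  calc (((univ ×ˢ univ : Finset (Fin nn × Fin nn))).filter (fun p => p.1 < p.2)).card * 2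
      = (((univ ×ˢ univ : Finset (Fin nn × Fin nn))).filter (fun p => p.1 < p.2)).card
        + (((univ ×ˢ univ : Finset (Fin nn × Fin nn))).filter (fun p => p.2 < p.1)).card := by
        omega
    _ = nn*nn - nn := by rw [← hcu, hD]
    _ = nn*(nn-1) := nnIdent nn
    _ = nn*(nn-1)/2*2 := halfMul.symm

lemma offdiag_sign {nn : ℕ} (g : Fin nn → Fin nn → ℂ) (hg : ∀ i j, g j i = -(g i j)) :
    ∏ p ∈ (univ ×ˢ univ : Finset (Fin nn × Fin nn)).filter (fun p => p.1 ≠ p.2), g p.1 p.2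
      = (-1)^(nn*(nn-1)/2) *
        ∏ p ∈ (univ ×ˢ univ : Finset (Fin nn × Fin nn)).filter (fun p => p.1 < p.2), (g p.1 p.2)^2 := by
  have hunion : (((univ ×ˢ univ : Finset (Fin nn × Fin nn))).filter (fun p => p.1 < p.2))
      ∪ (((univ ×ˢ univ : Finset (Fin nn × Fin nn))).filter (fun p => p.2 < p.1))
      = ((univ ×ˢ univ : Finset (Fin nn × Fin nn))).filter (fun p => p.1 ≠ p.2) := by
    ext p
    simp only [mem_union, mem_filter, mem_product, mem_univ, true_and]
    omega
  have hdisj : Disjoint (((univ ×ˢ univ : Finset (Fin nn × Fin nn))).filter (fun p => p.1 < p.2))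
      (((univ ×ˢ univ : Finset (Fin nn × Fin nn))).filter (fun p => p.2 < p.1)) := by
    rw [Finset.disjoint_left]
    intro p hp hp2
    simp only [mem_filter] at hp hp2
    omega
  have hswap : ∏ p ∈ (((univ ×ˢ univ : Finset (Fin nn × Fin nn))).filter (fun p => p.2 < p.1)), g p.1 p.2
      = ∏ p ∈ (((univ ×ˢ univ : Finset (Fin nn × Fin nn))).filter (fun p => p.1 < p.2)), g p.2 p.1 := by
    apply Finset.prod_nbij' (i := Prod.swap) (j := Prod.swap)
    · intro p hp
      simp only [mem_filter, mem_product, mem_univ, true_and] at hp ⊢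
      exact hp
    · intro p hp
      simp only [mem_filter, mem_product, mem_univ, true_and] at hp ⊢
      exact hp
    · intro p _; simp
    · intro p _; simp
    · intro p _; rfl
  rw [← hunion, Finset.prod_union hdisj, hswap, ← Finset.prod_mul_distrib]
  rw [← cardPairs nn, ← Finset.prod_const]
  rw [← Finset.prod_mul_distrib]
  refine Finset.prod_congr rfl fun p _ => ?_
  rw [hg p.1 p.2]
  ring

section Stest
variable {s : ℂ} {m : ℕ}
variable (hm : 1 ≤ m) (hs : IsPrimitiveRoot s (2*(2*m+2)))
include hm hs

lemma hzeta2 : IsPrimitiveRoot (s^2) (2*m+2) := hs.pow (by omega) (by ring)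

lemma hs_ne : s ≠ 0 := by
  intro h
  have := hs.pow_eq_one
  rw [h, zero_pow (by omega)] at this
  exact zero_ne_one this

lemma smul_one {c d : ℕ} (hcd : c + d = 2*(2*m+2)) : s^c * s^d = 1 := by
  rw [← pow_add, hcd, hs.pow_eq_one]

lemma brNat {c : ℕ} (hc : c ≤ 2*(2*m+2)) :
    br s (c:ℤ) = s^c - s^(2*(2*m+2) - c) := by
  unfold br
  rw [zpow_natCast]
  congr 1
  rw [zpow_neg, zpow_natCast]
  symm
  exact eq_inv_of_mul_eq_one_left (smul_one hm hs (by omega))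

lemma xcNat {c : ℕ} (hc : c ≤ 2*m+2) :
    xc (s^2) (2*m+2) c = s^(2*c) + s^(2*(2*m+2) - 2*c) := by
  unfold xc
  rw [← pow_mul, ← pow_mul]
  have he : 2*(2*m+2-c) = 2*(2*m+2) - 2*c := by omega
  rw [he]

lemma brSq {a : ℕ} (h1 : 1 ≤ a) (h2 : a ≤ m) :
    (br s (2*(a:ℤ)))^2 = xc (s^2) (2*m+2) a ^ 2 - 4 := by
  have hcast : (2*(a:ℤ)) = ((2*a : ℕ) : ℤ) := by push_cast; ring
  rw [hcast, brNat hm hs (by omega), xcNat hm hs (by omega)]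
  have huv : s^(2*a) * s^(2*(2*m+2) - 2*a) = 1 := smul_one hm hs (by omega)
  linear_combination (-4 : ℂ) * huv

lemma brPair {a b : ℕ} (hb1 : 1 ≤ b) (hba : b < a) (ham : a ≤ m) :
    br s ((a:ℤ)+(b:ℤ)) * br s ((a:ℤ)-(b:ℤ))
      = xc (s^2) (2*m+2) a - xc (s^2) (2*m+2) b := by
  have hc1 : ((a:ℤ)+(b:ℤ)) = ((a+b : ℕ) : ℤ) := by push_cast; ring
  have hc2 : ((a:ℤ)-(b:ℤ)) = ((a-b : ℕ) : ℤ) := by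
    have : b ≤ a := le_of_lt hba
    push_cast [Nat.cast_sub this]
    ring
  set N := 2*(2*m+2) with hN
  rw [hc1, hc2, brNat hm hs (by omega), brNat hm hs (by omega),
    xcNat hm hs (by omega), xcNat hm hs (by omega)]
  have h1 : s^(a+b) * s^(a-b) = s^(2*a) := by rw [← pow_add]; congr 1; omega
  have h4 : s^(N-(a+b)) * s^(N-(a-b)) = s^(N-2*a) := by
    rw [← pow_add]
    have he : (N-(a+b)) + (N-(a-b)) = N + (N-2*a) := by omega
    rw [he, pow_add, hs.pow_eq_one, one_mul]
  have h5 : s^(a+b) * s^(N-(a-b)) = s^(2*b) := by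
    rw [← pow_add]
    have he : (a+b) + (N-(a-b)) = N + 2*b := by omega
    rw [he, pow_add, hs.pow_eq_one, one_mul]
  have h6 : s^(a-b) * s^(N-(a+b)) = s^(N-2*b) := by
    rw [← pow_add]
    congr 1
    omega
  linear_combination h1 + h4 - h5 - h6

end Stest

lemma tuples_mem {nn mb : ℕ} {t : Fin nn → ℕ} (ht : t ∈ Tuples' nn mb) :
    (∀ i j, i < j → t j < t i) ∧ (∀ i, 0 < t i) ∧ (∀ i, t i ≤ mb) := by
  unfold Tuples' at ht
  rw [Finset.mem_filter, Finset.mem_Icc] at ht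
  refine ⟨ht.2.1, ht.2.2, fun i => ?_⟩
  have := ht.1.2
  exact this i

lemma tuples_inj {nn mb : ℕ} {t : Fin nn → ℕ} (ht : t ∈ Tuples' nn mb) :
    Function.Injective t := by
  obtain ⟨hanti, _, _⟩ := tuples_mem ht
  intro i j hij
  rcases lt_trichotomy i j with h|h|h
  · have := hanti i j h; omega
  · exact h
  · have := hanti j i h; omega

section Ttest
variable {s : ℂ} {m : ℕ}
variable (hm : 1 ≤ m) (hs : IsPrimitiveRoot s (2*(2*m+2)))
include hm hs

lemma PprodSq {nn : ℕ} {t : Fin nn → ℕ} (ht : t ∈ Tuples' nn m) :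
    Pprod s nn t ^ 2 = (-1)^(nn*(nn-1)/2) * Qc (s^2) m (Finset.image t Finset.univ) := by
  obtain ⟨hanti, hpos, hle⟩ := tuples_mem ht
  have hinj := tuples_inj ht
  set S := Finset.image t Finset.univ with hSdef
  have hA : (∏ j : Fin nn, br s (2 * (t j : ℤ)))^2
      = ∏ a ∈ S, (xc (s^2) (2*m+2) a^2 - 4) := by
    rw [hSdef, Finset.prod_image (fun i _ j _ h => hinj h), ← Finset.prod_pow]
    exact Finset.prod_congr rfl fun j _ => brSq hm hs (hpos j) (hle j)
  set g : Fin nn → Fin nn → ℂ :=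
    fun i j => xc (s^2) (2*m+2) (t i) - xc (s^2) (2*m+2) (t j) with hgdef
  have hsign := offdiag_sign g (fun i j => by rw [hgdef]; ring)
  have hbij : ∏ p ∈ (univ ×ˢ univ : Finset (Fin nn × Fin nn)).filter (fun p => p.1 ≠ p.2), g p.1 p.2
      = ∏ a ∈ S, ∏ b ∈ S.erase a, (xc (s^2) (2*m+2) a - xc (s^2) (2*m+2) b) := by
    rw [← prod_pairs_ne S _]
    apply Finset.prod_bij (i := fun p _ => ((t p.1, t p.2) : ℕ × ℕ))
    · intro p hp
      simp only [Finset.mem_filter, Finset.mem_product, Finset.mem_univ, true_and] at hp ⊢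
      exact ⟨⟨Finset.mem_image_of_mem t (Finset.mem_univ _),
        Finset.mem_image_of_mem t (Finset.mem_univ _)⟩, fun h => hp (hinj h)⟩
    · intro p hp q hq hpq
      simp only [Prod.mk.injEq] at hpq
      exact Prod.ext (hinj hpq.1) (hinj hpq.2)
    · intro q hq
      simp only [Finset.mem_filter, Finset.mem_product, hSdef, Finset.mem_image,
        Finset.mem_univ, true_and] at hq
      obtain ⟨⟨⟨i, hi⟩, ⟨j, hj⟩⟩, hne⟩ := hq
      refine ⟨(i, j), ?_, by simp [hi, hj]⟩
      simp only [Finset.mem_filter, Finset.mem_product, Finset.mem_univ, true_and]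
      intro h
      exact hne (by rw [← hi, ← hj, h])
    · intro p hp
      rfl
  have hB : (∏ p ∈ (univ ×ˢ univ : Finset (Fin nn × Fin nn)).filter (fun p => p.1 < p.2),
        br s ((t p.1 : ℤ) + (t p.2 : ℤ)) * br s ((t p.1 : ℤ) - (t p.2 : ℤ)))^2
      = (-1)^(nn*(nn-1)/2) *
        ∏ a ∈ S, ∏ b ∈ S.erase a, (xc (s^2) (2*m+2) a - xc (s^2) (2*m+2) b) := by
    have hpair : ∀ p ∈ (univ ×ˢ univ : Finset (Fin nn × Fin nn)).filter (fun p => p.1 < p.2),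
        br s ((t p.1 : ℤ) + (t p.2 : ℤ)) * br s ((t p.1 : ℤ) - (t p.2 : ℤ)) = g p.1 p.2 := by
      intro p hp
      simp only [Finset.mem_filter] at hp
      exact brPair hm hs (hpos p.2) (hanti p.1 p.2 hp.2) (hle p.1)
    calc (∏ p ∈ (univ ×ˢ univ : Finset (Fin nn × Fin nn)).filter (fun p => p.1 < p.2),
          br s ((t p.1 : ℤ) + (t p.2 : ℤ)) * br s ((t p.1 : ℤ) - (t p.2 : ℤ)))^2
        = (∏ p ∈ (univ ×ˢ univ : Finset (Fin nn × Fin nn)).filter (fun p => p.1 < p.2), g p.1 p.2)^2 := by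
          rw [Finset.prod_congr rfl hpair]
      _ = ∏ p ∈ (univ ×ˢ univ : Finset (Fin nn × Fin nn)).filter (fun p => p.1 < p.2), (g p.1 p.2)^2 := by
          rw [← Finset.prod_pow]
      _ = (-1)^(nn*(nn-1)/2) *
          ((-1 : ℂ)^(nn*(nn-1)/2) *
            ∏ p ∈ (univ ×ˢ univ : Finset (Fin nn × Fin nn)).filter (fun p => p.1 < p.2), (g p.1 p.2)^2) := by
          rw [← mul_assoc, negSq, one_mul]
      _ = (-1)^(nn*(nn-1)/2) *
          ∏ p ∈ (univ ×ˢ univ : Finset (Fin nn × Fin nn)).filter (fun p => p.1 ≠ p.2), g p.1 p.2 := by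
          rw [← hsign]
      _ = (-1)^(nn*(nn-1)/2) *
          ∏ a ∈ S, ∏ b ∈ S.erase a, (xc (s^2) (2*m+2) a - xc (s^2) (2*m+2) b) := by
          rw [hbij]
  unfold Pprod
  rw [mul_pow, hA, hB]
  unfold Qc
  ring

lemma image_subset_Icc {nn : ℕ} {t : Fin nn → ℕ} (ht : t ∈ Tuples' nn m) :
    Finset.image t Finset.univ ⊆ Icc 1 m := by
  obtain ⟨_, hpos, hle⟩ := tuples_mem ht
  intro a ha
  obtain ⟨i, _, rfl⟩ := Finset.mem_image.1 ha
  exact mem_Icc.2 ⟨hpos i, hle i⟩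

lemma PprodNe {nn : ℕ} {t : Fin nn → ℕ} (ht : t ∈ Tuples' nn m) :
    Pprod s nn t ≠ 0 := by
  intro h0
  have hsq := PprodSq hm hs ht
  rw [h0] at hsq
  have hQne2 : ((-1 : ℂ)^(nn*(nn-1)/2) * Qc (s^2) m (Finset.image t Finset.univ)) ≠ 0 :=
    mul_ne_zero (pow_ne_zero _ (by norm_num))
      (Qne hm (hzeta2 hm hs) (image_subset_Icc hm hs ht))
  exact hQne2 (by rw [← hsq]; norm_num)

end Ttest

lemma sumTuples {nn mb : ℕ} (f : Finset ℕ → ℂ) :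
    ∑ t ∈ Tuples' nn mb, f (Finset.image t Finset.univ)
      = ∑ S ∈ Finset.powersetCard nn (Icc 1 mb), f S := by
  refine Finset.sum_bij' (i := fun t _ => Finset.image t Finset.univ)
    (j := fun S hS => fun q : Fin nn =>
      (S.orderEmbOfFin (Finset.mem_powersetCard.1 hS).2 q.rev : ℕ)) ?_ ?_ ?_ ?_ ?_
  · intro t ht
    rw [Finset.mem_powersetCard]
    refine ⟨?_, ?_⟩
    · intro a ha
      obtain ⟨i, _, rfl⟩ := Finset.mem_image.1 ha
      obtain ⟨_, hpos, hle⟩ := tuples_mem ht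
      exact mem_Icc.2 ⟨hpos i, hle i⟩
    · rw [Finset.card_image_of_injective _ (tuples_inj ht), card_univ, Fintype.card_fin]
  · intro S hS
    have hsub := (Finset.mem_powersetCard.1 hS).1
    unfold Tuples'
    rw [Finset.mem_filter, Finset.mem_Icc]
    refine ⟨⟨fun i => Nat.zero_le _, fun i => ?_⟩, fun i j hij => ?_, fun i => ?_⟩
    · exact (mem_Icc.1 (hsub (Finset.orderEmbOfFin_mem _ _ _))).2
    · exact (S.orderEmbOfFin _).strictMono (Fin.rev_lt_rev.2 hij)
    · exact (mem_Icc.1 (hsub (Finset.orderEmbOfFin_mem _ _ _))).1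
  · intro t ht
    funext q
    obtain ⟨hanti, _, _⟩ := tuples_mem ht
    have hcard : (Finset.image t Finset.univ).card = nn := by
      rw [Finset.card_image_of_injective _ (tuples_inj ht), card_univ, Fintype.card_fin]
    have hmono : StrictMono (fun q : Fin nn => t q.rev) := by
      intro i j hij
      exact hanti j.rev i.rev (Fin.rev_lt_rev.2 hij)
    have huniq := Finset.orderEmbOfFin_unique (f := fun q : Fin nn => t q.rev) hcard
      (fun q => Finset.mem_image_of_mem t (Finset.mem_univ _)) hmono
    calc ((Finset.image t Finset.univ).orderEmbOfFin _ q.rev : ℕ)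
        = (fun q : Fin nn => t q.rev) q.rev := by rw [huniq]
      _ = t q := by simp [Fin.rev_rev]
  · intro S hS
    have hsub := (Finset.mem_powersetCard.1 hS).1
    have hcard := (Finset.mem_powersetCard.1 hS).2
    apply Finset.eq_of_subset_of_card_le
    · intro a ha
      obtain ⟨i, _, rfl⟩ := Finset.mem_image.1 ha
      exact Finset.orderEmbOfFin_mem _ _ _
    · rw [Finset.card_image_of_injective, card_univ, Fintype.card_fin, hcard]
      intro i j hij
      exact Fin.rev_injective ((S.orderEmbOfFin hcard).injective hij)
  · intro t ht
    rfl

lemma sumCompl {nn mb : ℕ} (hnm : nn ≤ mb) (f : Finset ℕ → ℂ) :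
    ∑ S ∈ Finset.powersetCard nn (Icc 1 mb), f (Icc 1 mb \ S)
      = ∑ T ∈ Finset.powersetCard (mb - nn) (Icc 1 mb), f T := by
  have hIcc : (Icc 1 mb).card = mb := by rw [Nat.card_Icc, Nat.add_sub_cancel]
  refine Finset.sum_bij' (i := fun S _ => Icc 1 mb \ S) (j := fun T _ => Icc 1 mb \ T) ?_ ?_ ?_ ?_ ?_
  · intro S hS
    obtain ⟨hsub, hcard⟩ := Finset.mem_powersetCard.1 hS
    rw [Finset.mem_powersetCard]
    exact ⟨sdiff_subset, by rw [Finset.card_sdiff_of_subset hsub, hIcc, hcard]⟩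
  · intro T hT
    obtain ⟨hsub, hcard⟩ := Finset.mem_powersetCard.1 hT
    rw [Finset.mem_powersetCard]
    refine ⟨sdiff_subset, ?_⟩
    rw [Finset.card_sdiff_of_subset hsub, hIcc, hcard]
    omega
  · intro S hS
    exact Finset.sdiff_sdiff_eq_self (Finset.mem_powersetCard.1 hS).1
  · intro T hT
    exact Finset.sdiff_sdiff_eq_self (Finset.mem_powersetCard.1 hT).1
  · intro S hS
    rfl

end

/-- Level-rank duality `d_g(C^{n,k}) = d_g(C^{k,n})` for the
genus-`g` Verlinde formulas, with `l = 2n+2k+2` and `s` a primitive `2l`-th root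
of unity. -/
theorem level_rank_duality_C (n k : ℕ) (hn : 1 ≤ n) (hk : 1 ≤ k)
    (s : ℂ) (hs : IsPrimitiveRoot s (2 * (2 * n + 2 * k + 2)))
    (g : ℕ) (hg : 1 ≤ g) :
    (-((2 * n + 2 * k + 2 : ℕ) : ℂ)) ^ ((n : ℤ) * ((g : ℤ) - 1)) *
      ∑ t ∈ Tuples' n (n + k), Pprod s n t ^ (2 * (1 - (g : ℤ))) =
    (-((2 * n + 2 * k + 2 : ℕ) : ℂ)) ^ ((k : ℤ) * ((g : ℤ) - 1)) *
      ∑ t ∈ Tuples' k (n + k), Pprod s k t ^ (2 * (1 - (g : ℤ))) := by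
  set m := n + k with hmdef
  have hm : 1 ≤ m := by omega
  have hs' : IsPrimitiveRoot s (2*(2*m+2)) := by
    have he : 2*(2*m+2) = 2 * (2*n+2*k+2) := by omega
    rw [he]; exact hs
  have hζ := hzeta2 hm hs'
  set L := ((2*n+2*k+2 : ℕ) : ℂ) with hLdef
  have hLm : ((2*m+2 : ℕ) : ℂ) = L := by
    rw [hLdef]
    norm_cast
    omega
  set w := g - 1 with hwdef
  have hgw : ((g:ℤ) - 1) = ((w : ℕ) : ℤ) := by push_cast; omega
  set FF : ℕ → Finset ℕ → ℂ :=
    fun j S => ((-L)^j * (((-1:ℂ)^(j*(j-1)/2) * Qc (s^2) m S))⁻¹)^w with hFFdef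
  have termEq : ∀ (nn : ℕ), ∀ t ∈ Tuples' nn m,
      (-L)^((nn:ℤ) * ((g:ℤ)-1)) * Pprod s nn t ^ (2*(1-(g:ℤ)))
        = FF nn (Finset.image t Finset.univ) := by
    intro nn t ht
    have hP := PprodSq hm hs' ht
    have he2 : (2*(1-(g:ℤ))) = -(((2*w : ℕ)) : ℤ) := by push_cast; omega
    rw [hgw, ← Nat.cast_mul, zpow_natCast, he2, zpow_neg, zpow_natCast]
    rw [pow_mul, pow_mul, hP, hFFdef]
    rw [← inv_pow, ← mul_pow]
  have dual : ∀ S ∈ Finset.powersetCard n (Icc 1 m), FF n S = FF k (Icc 1 m \ S) := by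
    intro S hS
    obtain ⟨hsub, hcard⟩ := Finset.mem_powersetCard.1 hS
    have hTcard : (Icc 1 m \ S).card = k := by
      rw [Finset.card_sdiff_of_subset hsub, Nat.card_Icc]
      omega
    have hd := setDuality hm hζ hsub (by omega) (by rw [hTcard]; exact hk)
    rw [hcard, hTcard, hLm] at hd
    have hAne : ((-1:ℂ)^(n*(n-1)/2) * Qc (s^2) m S) ≠ 0 :=
      mul_ne_zero (pow_ne_zero _ (by norm_num)) (Qne hm hζ hsub)
    have hBne : ((-1:ℂ)^(k*(k-1)/2) * Qc (s^2) m (Icc 1 m \ S)) ≠ 0 :=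
      mul_ne_zero (pow_ne_zero _ (by norm_num)) (Qne hm hζ sdiff_subset)
    have hbase : (-L)^n * (((-1:ℂ)^(n*(n-1)/2) * Qc (s^2) m S))⁻¹
        = (-L)^k * (((-1:ℂ)^(k*(k-1)/2) * Qc (s^2) m (Icc 1 m \ S)))⁻¹ := by
      rw [← div_eq_mul_inv, ← div_eq_mul_inv, div_eq_div_iff hAne hBne]
      linear_combination hd
    rw [hFFdef]
    simp only
    rw [hbase]
  calc (-L)^((n:ℤ)*((g:ℤ)-1)) * ∑ t ∈ Tuples' n m, Pprod s n t ^ (2*(1-(g:ℤ)))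
      = ∑ t ∈ Tuples' n m, (-L)^((n:ℤ)*((g:ℤ)-1)) * Pprod s n t ^ (2*(1-(g:ℤ))) :=
        Finset.mul_sum _ _ _
    _ = ∑ t ∈ Tuples' n m, FF n (Finset.image t Finset.univ) :=
        Finset.sum_congr rfl (termEq n)
    _ = ∑ S ∈ Finset.powersetCard n (Icc 1 m), FF n S := sumTuples (FF n)
    _ = ∑ S ∈ Finset.powersetCard n (Icc 1 m), FF k (Icc 1 m \ S) :=
        Finset.sum_congr rfl dual
    _ = ∑ T ∈ Finset.powersetCard (m - n) (Icc 1 m), FF k T := sumCompl (by omega) (FF k)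
    _ = ∑ T ∈ Finset.powersetCard k (Icc 1 m), FF k T := by
        rw [show m - n = k by omega]
    _ = ∑ t ∈ Tuples' k m, FF k (Finset.image t Finset.univ) := (sumTuples (FF k)).symm
    _ = ∑ t ∈ Tuples' k m, (-L)^((k:ℤ)*((g:ℤ)-1)) * Pprod s k t ^ (2*(1-(g:ℤ))) :=
        Finset.sum_congr rfl (fun t ht => (termEq k t ht).symm)
    _ = (-L)^((k:ℤ)*((g:ℤ)-1)) * ∑ t ∈ Tuples' k m, Pprod s k t ^ (2*(1-(g:ℤ))) :=
        (Finset.mul_sum _ _ _).symm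
end

section
/- Let s ∈ ℂ be a primitive 16-th root of unity and let g ≥ 1 be an integer. Then (−8)^{g−1} · ∑_{l=1}^{3} ( (s^{2l} − s^{−2l})² )^{1−g} = 2^{g−1}(1 + 2^g), where negative integer powers denote inverses in ℂ. -/
/-- For `s` a primitive 16-th root of unity and `g ≥ 1`, the
genus-`g` Verlinde formula of `C^{1,2}` evaluates to `2^{g-1}(1 + 2^g)`, the
number of spin structures with Arf invariant zero on a genus-`g` surface:
`(-8)^{g-1} ∑_{l=1}^{3} ((s^{2l} - s^{-2l})²)^{1-g} = 2^{g-1}(1 + 2^g)`. -/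
theorem verlinde_C_one_two (s : ℂ) (hs : IsPrimitiveRoot s 16)
    (g : ℕ) (hg : 1 ≤ g) :
    (-8 : ℂ) ^ ((g : ℤ) - 1) *
      ∑ l ∈ Finset.Icc 1 3,
        ((s ^ (2 * (l : ℤ)) - s ^ (-(2 * (l : ℤ)))) ^ 2) ^ (1 - (g : ℤ)) =
    2 ^ ((g : ℤ) - 1) * (1 + 2 ^ (g : ℤ)) := by
  obtain ⟨k, rfl⟩ : ∃ k, g = k + 1 := ⟨g - 1, (Nat.succ_pred_eq_of_pos hg).symm⟩
  have hs0 : s ≠ 0 := hs.ne_zero (by norm_num)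
  have h16 : s ^ 16 = 1 := hs.pow_eq_one
  have h8 : s ^ 8 = -1 := by
    have hne : s ^ 8 ≠ 1 := hs.pow_ne_one_of_pos_of_lt (by norm_num) (by norm_num)
    have h2 : (s ^ 8 - 1) * (s ^ 8 + 1) = 0 := by linear_combination h16
    rcases mul_eq_zero.mp h2 with h | h
    · exact absurd (sub_eq_zero.mp h) hne
    · linear_combination h
  have h1 : (s ^ 2 - (s ^ 2)⁻¹) ^ 2 = (-2 : ℂ) := by
    field_simp
    linear_combination h8
  have h2 : (s ^ 4 - (s ^ 4)⁻¹) ^ 2 = (-4 : ℂ) := by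
    field_simp
    linear_combination (s^8 + 1) * h8
  have h3 : (s ^ 6 - (s ^ 6)⁻¹) ^ 2 = (-2 : ℂ) := by
    field_simp
    linear_combination (s^16 - 2*s^8 + 2) * h8 + h16
  have hk1 : (((k+1 : ℕ) : ℤ) - 1) = (k : ℤ) := by push_cast; ring
  have hk2 : (1 - ((k+1 : ℕ) : ℤ)) = -(k : ℤ) := by push_cast; ring
  rw [hk1]
  rw [show (Finset.Icc 1 3 : Finset ℤ) = {1, 2, 3} by decide]
  rw [Finset.sum_insert (by decide), Finset.sum_insert (by decide), Finset.sum_singleton]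
  norm_num [hk2]
  rw [h1, h2, h3]
  have e1 : (-8:ℂ)^k * (((-2:ℂ))^k)⁻¹ = 4^k := by
    rw [← inv_pow, ← mul_pow]; norm_num
  have e2 : (-8:ℂ)^k * (((-4:ℂ))^k)⁻¹ = 2^k := by
    rw [← inv_pow, ← mul_pow]; norm_num
  have e3 : (4:ℂ)^k = 2^k * 2^k := by rw [← mul_pow]; norm_num
  have e4 : (2:ℂ)^((k:ℤ)+1) = 2^k * 2 := by
    rw [show (k:ℤ)+1 = ((k+1:ℕ):ℤ) by push_cast; ring, zpow_natCast, pow_succ]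
  rw [e4]
  linear_combination 2 * e1 + e2 + 2 * e3
end

section
/- Let α and s be nonzero complex numbers with s not a root of unity, and let N ≥ 1 be an integer. For m ≥ 0 let ⟨1^{m+1}⟩_{α,s} = (∏_{j=0}^{m−1} [−j]_α) · ([−m]_α + [m+1]) / [m+1]! denote the quantum dimension of the single-column partition with m+1 cells. If ⟨1^{N+1}⟩_{α,s} = 0 and ⟨1^{m+1}⟩_{α,s} ≠ 0 for every integer m with 0 ≤ m < N, then α = −s^{2N+1} or α = s^{N−1} or α = −s^{N−1}. -/
open Finset

/-- Quantum integer `[m] = (s^m - s^{-m})/(s - s⁻¹)`. -/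
noncomputable def qint (s : ℂ) (m : ℤ) : ℂ := (s ^ m - s ^ (-m)) / (s - s⁻¹)

/-- Quantum integer `[m]_α = (α s^m - α⁻¹ s^{-m})/(s - s⁻¹)`. -/
noncomputable def qintA (α s : ℂ) (m : ℤ) : ℂ := (α * s ^ m - α⁻¹ * s ^ (-m)) / (s - s⁻¹)

/-- The quantum dimension of the single-column partition with `m+1` cells:
`⟨1^{m+1}⟩_{α,s} = (∏_{j=0}^{m-1} [-j]_α) · ([-m]_α + [m+1]) / [m+1]!`. -/
noncomputable def colDim (α s : ℂ) (m : ℕ) : ℂ :=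
  (∏ j ∈ Finset.range m, qintA α s (-(j : ℤ))) *
    (qintA α s (-(m : ℤ)) + qint s ((m : ℤ) + 1)) /
  ∏ i ∈ Finset.Icc 1 (m + 1), qint s (i : ℤ)

lemma qint_ne_zero (s : ℂ) (hs : s ≠ 0) (hroot : ∀ m : ℕ, 0 < m → s ^ m ≠ 1)
    (k : ℕ) (hk : 1 ≤ k) : qint s (k : ℤ) ≠ 0 := by
  have hd : s - s⁻¹ ≠ 0 := by
    intro h
    apply hroot 2 (by norm_num)
    have : s * s = 1 := by field_simp at h; linear_combination h
    calc s ^ 2 = s * s := sq s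
    _ = 1 := this
  have hnum : s ^ (k : ℤ) - s ^ (-(k : ℤ)) ≠ 0 := by
    intro h
    apply hroot (2 * k) (by omega)
    rw [zpow_natCast, zpow_neg, zpow_natCast] at h
    have h1 : s ^ k = (s ^ k)⁻¹ := by linear_combination h
    have h2 : s ^ k * s ^ k = 1 := by field_simp at h1; linear_combination h1
    calc s ^ (2 * k) = s ^ k * s ^ k := by rw [two_mul, pow_add]
    _ = 1 := h2
  exact div_ne_zero hnum hd

/-- If the column of `N+1` cells is the smallest column with
vanishing quantum dimension, then `α = -s^{2N+1}` or `α = ±s^{N-1}`. -/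
theorem column_vanishing_classification (α s : ℂ) (hα : α ≠ 0) (hs : s ≠ 0)
    (hroot : ∀ m : ℕ, 0 < m → s ^ m ≠ 1) (N : ℕ) (hN : 1 ≤ N)
    (hzero : colDim α s N = 0) (hnz : ∀ m : ℕ, m < N → colDim α s m ≠ 0) :
    α = -s ^ (2 * (N : ℤ) + 1) ∨ α = s ^ ((N : ℤ) - 1) ∨ α = -s ^ ((N : ℤ) - 1) := by
  have hd : s - s⁻¹ ≠ 0 := by
    intro h
    apply hroot 2 (by norm_num)
    have : s * s = 1 := by field_simp at h; linear_combination h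
    calc s ^ 2 = s * s := sq s
    _ = 1 := this
  have hden : ∀ m : ℕ, (∏ i ∈ Finset.Icc 1 (m + 1), qint s (i : ℤ)) ≠ 0 := by
    intro m
    refine Finset.prod_ne_zero_iff.2 fun i hi => ?_
    exact qint_ne_zero s hs hroot i (Finset.mem_Icc.1 hi).1
  have hnum : (∏ j ∈ Finset.range N, qintA α s (-(j : ℤ))) *
      (qintA α s (-(N : ℤ)) + qint s ((N : ℤ) + 1)) = 0 := by
    unfold colDim at hzero
    rcases div_eq_zero_iff.1 hzero with h | h
    · exact h
    · exact absurd h (hden N)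
  rcases mul_eq_zero.1 hnum with hprod | hsum
  · -- some factor vanishes
    obtain ⟨j, hj, hjz⟩ := Finset.prod_eq_zero_iff.1 hprod
    have hjN : j < N := Finset.mem_range.1 hj
    by_cases hcase : j = N - 1
    · have hxne : (s : ℂ) ^ j ≠ 0 := pow_ne_zero _ hs
      have hnum0 : α * s ^ (-(j : ℤ)) - α⁻¹ * s ^ ((j : ℤ)) = 0 := by
        unfold qintA at hjz
        rcases div_eq_zero_iff.1 hjz with h | h
        · rw [neg_neg] at h; exact h
        · exact absurd h hd
      rw [zpow_neg, zpow_natCast] at hnum0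
      have hfac : (α - s ^ j) * (α + s ^ j) = 0 := by
        field_simp at hnum0
        linear_combination hnum0
      have hcast : s ^ ((N : ℤ) - 1) = s ^ j := by
        rw [show (N : ℤ) - 1 = (j : ℤ) by omega, zpow_natCast]
      rcases mul_eq_zero.1 hfac with h | h
      · exact Or.inr (Or.inl (by rw [hcast]; linear_combination h))
      · exact Or.inr (Or.inr (by rw [hcast]; linear_combination h))
    · exfalso
      apply hnz (j + 1) (by omega)
      unfold colDim
      rw [Finset.prod_eq_zero (Finset.mem_range.2 (Nat.lt_succ_self j)) hjz]
      simp
  · have hnum0 : α * s ^ (-(N : ℤ)) - α⁻¹ * s ^ ((N : ℤ))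
        + (s ^ ((N : ℤ) + 1) - s ^ (-((N : ℤ) + 1))) = 0 := by
      unfold qintA qint at hsum
      rw [← add_div] at hsum
      rcases div_eq_zero_iff.1 hsum with h | h
      · rw [neg_neg] at h; linear_combination h
      · exact absurd h hd
    set x := s ^ ((N : ℤ)) with hx
    have hxne : x ≠ 0 := zpow_ne_zero _ hs
    have e1 : s ^ (-(N : ℤ)) = x⁻¹ := zpow_neg s (N : ℤ)
    have e2 : s ^ ((N : ℤ) + 1) = x * s := by rw [zpow_add_one₀ hs]
    have e3 : s ^ (-((N : ℤ) + 1)) = x⁻¹ * s⁻¹ := by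
      rw [zpow_neg, zpow_add_one₀ hs, mul_inv]
    have e4 : s ^ (2 * (N : ℤ) + 1) = x * x * s := by
      rw [zpow_add_one₀ hs, two_mul, zpow_add₀ hs]
    rw [e1, e2, e3] at hnum0
    have hx1 : x * x⁻¹ = 1 := mul_inv_cancel₀ hxne
    have ha1 : α * α⁻¹ = 1 := mul_inv_cancel₀ hα
    have hs1 : s * s⁻¹ = 1 := mul_inv_cancel₀ hs
    have hfac : (α + x * x * s) * (α - s⁻¹) = 0 := by
      linear_combination (α * x) * hnum0 - (α ^ 2 - α * s⁻¹) * hx1 + x ^ 2 * ha1 - x ^ 2 * hs1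
    rcases mul_eq_zero.1 hfac with h | h
    · left; rw [e4]; linear_combination h
    · exfalso
      have hαs : α = s⁻¹ := by linear_combination h
      apply hnz 0 hN
      have hz : qintA α s (-((0:ℕ) : ℤ)) + qint s (((0:ℕ) : ℤ) + 1) = 0 := by
        unfold qintA qint
        rw [← add_div, div_eq_zero_iff]
        left
        rw [hαs]
        push_cast
        simp [zpow_neg]
      unfold colDim
      rw [hz]
      simp
end
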